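/- Let (σ_n)_{n≥0} be defined by σ_0 = 2x₀α, σ_{n+1} = 2x₀ - 1/σ_n with x₀ = 1/(2√(q₀(1-q₀))), q₀ ∈ (1/2,1), 1 - q₀ < α < q₀. For x ∈ ℝ define v_0(x) = 0, v_1(x) = 1, v_{n+1}(x) = (2x - σ_{n+1} + σ_{n-1})v_n(x) - v_{n-1}(x). Then for every x > 1 the sequence (v_n(x))_{n≥0} is nonoscillatory, i.e. eventually of constant sign; and for every x < 1 it is oscillatory. -/

import Mathlib

/-- Once a solution of the recurrence with coefficients ≥ 2 is nonnegative and
nondecreasing (and not identically zero at that spot), it stays positive. -/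
lemma up_lemma (w c : ℕ → ℝ) (m : ℕ) (hm : 1 ≤ m)
    (hc : ∀ n, m ≤ n → 2 ≤ c n)
    (hrec : ∀ n, 1 ≤ n → w (n + 1) = c n * w n - w (n - 1))
    (n : ℕ) (hn : m ≤ n) (h1 : 0 ≤ w (n + 1)) (h2 : w n ≤ w (n + 1))
    (hnz : ¬(w n = 0 ∧ w (n + 1) = 0)) :
    ∀ k, n + 2 ≤ k → 0 < w k := by
  have hr := hrec (n + 1) (by omega)
  simp only [Nat.add_sub_cancel] at hr
  have hcn := hc (n + 1) (by omega)
  have base : 0 < w (n + 2) ∧ w (n + 1) ≤ w (n + 2) := by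
    rcases lt_or_eq_of_le h1 with h | h
    · constructor
      · nlinarith
      · nlinarith
    · have hwn : w n < 0 := by
        rcases lt_or_eq_of_le h2 with h' | h'
        · linarith
        · exact absurd ⟨by linarith, h.symm⟩ hnz
      constructor
      · rw [hr, ← h]; nlinarith
      · rw [hr, ← h]; nlinarith
  have inv : ∀ j, 0 < w (n + 2 + j) ∧ w (n + 1 + j) ≤ w (n + 2 + j) := by
    intro j
    induction j with
    | zero => exact base
    | succ j ih =>
      have hrj := hrec (n + 2 + j) (by omega)
      rw [show n + 2 + j - 1 = n + 1 + j by omega] at hrj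
      have hcj := hc (n + 2 + j) (by omega)
      have e1 : n + 2 + (j + 1) = (n + 2 + j) + 1 := by omega
      have e2 : n + 1 + (j + 1) = n + 2 + j := by omega
      constructor
      · rw [e1, hrj]; nlinarith [ih.1, ih.2]
      · rw [e1, e2, hrj]; nlinarith [ih.1, ih.2]
  intro k hk
  have h := (inv (k - (n + 2))).1
  rwa [show n + 2 + (k - (n + 2)) = k by omega] at h

lemma nonosc (w c : ℕ → ℝ) (m : ℕ) (hm : 1 ≤ m)
    (hc : ∀ n, m ≤ n → 2 ≤ c n)
    (hrec : ∀ n, 1 ≤ n → w (n + 1) = c n * w n - w (n - 1))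
    (hnz : ∀ n, ¬(w n = 0 ∧ w (n + 1) = 0)) :
    ∃ m', (∀ n, m' ≤ n → 0 < w n) ∨ (∀ n, m' ≤ n → w n < 0) := by
  classical
  have down : ∀ n, m ≤ n → w (n + 1) ≤ 0 → w (n + 1) ≤ w n →
      ¬(w n = 0 ∧ w (n + 1) = 0) → ∀ k, n + 2 ≤ k → w k < 0 := by
    intro n hn h1 h2 hz k hk
    have := up_lemma (fun i => -w i) c m hm hc
      (fun i hi => by show -w (i + 1) = c i * -w i - -w (i - 1); rw [hrec i hi]; ring)
      n hn (by simpa using h1) (by simpa using h2)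
      (by simp only [neg_eq_zero]; exact hz) k hk
    simpa using this
  by_cases h1 : ∀ n, m ≤ n → 0 < w n
  · exact ⟨m, Or.inl h1⟩
  push_neg at h1
  obtain ⟨a, ha, ha0⟩ := h1
  rcases eq_or_lt_of_le ha0 with haz | haneg
  · -- w a = 0
    rcases lt_trichotomy (w (a + 1)) 0 with hlt | heq | hgt
    · exact ⟨a + 2, Or.inr (down a ha hlt.le (by linarith) (hnz a))⟩
    · exact absurd ⟨haz, heq⟩ (hnz a)
    · exact ⟨a + 2, Or.inl (up_lemma w c m hm hc hrec a ha hgt.le (by linarith)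
        (hnz a))⟩
  · by_cases h2 : ∀ n, a ≤ n → w n < 0
    · exact ⟨a, Or.inr h2⟩
    push_neg at h2
    obtain ⟨b, hb, hb0⟩ := h2
    have hex : ∃ k, a ≤ k ∧ 0 ≤ w k := ⟨b, hb, hb0⟩
    set j := Nat.find hex with hjdef
    obtain ⟨hja, hj0⟩ := Nat.find_spec hex
    have hjne : a < j := by
      rcases lt_or_eq_of_le hja with h | h
      · exact h
      · exfalso; rw [← h] at hj0; linarith
    have hjm1 : w (j - 1) < 0 := by
      by_contra hcon
      push_neg at hcon
      exact Nat.find_min hex (show j - 1 < j by omega) ⟨by omega, hcon⟩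
    have e1 : j - 1 + 1 = j := by omega
    have := up_lemma w c m hm hc hrec (j - 1) (by omega)
      (by rw [e1]; exact hj0) (by rw [e1]; linarith)
      (by rw [e1]; rintro ⟨h, _⟩; linarith)
    exact ⟨j + 1, Or.inl (fun k hk => this k (by omega))⟩

lemma osc_false (w c : ℕ → ℝ) (x : ℝ) (hx : x < 1) (m : ℕ) (hm : 1 ≤ m)
    (hc : ∀ n, m ≤ n → c n ≤ 2 * x)
    (hrec : ∀ n, 1 ≤ n → w (n + 1) = c n * w n - w (n - 1))
    (hpos : ∀ n, m ≤ n → 0 < w n) : False := by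
  have key : ∀ n, m ≤ n → w (n + 1) - w n ≤ (w n - w (n - 1)) + (2 * x - 2) * w n := by
    intro n hn
    have hr := hrec n (by omega)
    have hcn := hc n hn
    have hwn := hpos n hn
    nlinarith [hr]
  by_cases hA : ∀ n, m ≤ n → 0 ≤ w (n + 1) - w n
  · have mono : ∀ k, w m ≤ w (m + k) := by
      intro k
      induction k with
      | zero => simp
      | succ k ih =>
        have := hA (m + k) (by omega)
        have e : m + (k + 1) = (m + k) + 1 := rfl
        rw [e]; linarith
    have dec : ∀ k : ℕ, w (m + k + 1) - w (m + k) ≤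
        (w (m + 1) - w m) + k * ((2 * x - 2) * w m) := by
      intro k
      induction k with
      | zero => simp
      | succ k ih =>
        have hk := key (m + k + 1) (by omega)
        rw [show m + k + 1 - 1 = m + k by omega] at hk
        have hww : w m ≤ w (m + k + 1) := mono (k + 1)
        have h2 : (2 * x - 2) * w (m + k + 1) ≤ (2 * x - 2) * w m := by
          nlinarith [hpos m le_rfl]
        have e : m + (k + 1) = (m + k) + 1 := rfl
        rw [e]
        push_cast
        linarith
    have hE : 0 < (2 - 2 * x) * w m := by nlinarith [hpos m le_rfl]
    obtain ⟨k, hk⟩ := exists_nat_gt ((w (m + 1) - w m) / ((2 - 2 * x) * w m))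
    rw [div_lt_iff₀ hE] at hk
    have h1 := dec k
    have h2 := hA (m + k) (by omega)
    have h3 : (k : ℝ) * ((2 * x - 2) * w m) = -((k : ℝ) * ((2 - 2 * x) * w m)) := by
      ring
    linarith
  · push_neg at hA
    obtain ⟨N, hN, hdN⟩ := hA
    have step : ∀ k : ℕ, w (N + k + 1) - w (N + k) ≤ w (N + 1) - w N := by
      intro k
      induction k with
      | zero => simp
      | succ k ih =>
        have hk := key (N + k + 1) (by omega)
        rw [show N + k + 1 - 1 = N + k by omega] at hk
        have h2 : (2 * x - 2) * w (N + k + 1) ≤ 0 := by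
          nlinarith [hpos (N + k + 1) (by omega)]
        have e : N + (k + 1) = (N + k) + 1 := rfl
        rw [e]
        linarith
    have lin : ∀ k : ℕ, w (N + k + 1) ≤ w (N + 1) + k * (w (N + 1) - w N) := by
      intro k
      induction k with
      | zero => simp
      | succ k ih =>
        have := step (k + 1)
        have e : N + (k + 1) = (N + k) + 1 := rfl
        rw [e] at this ⊢
        push_cast
        linarith
    have hd : 0 < -(w (N + 1) - w N) := by linarith
    obtain ⟨k, hk⟩ := exists_nat_gt (w (N + 1) / (-(w (N + 1) - w N)))
    rw [div_lt_iff₀ hd] at hk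
    have h1 := lin k
    have h2 := hpos (N + k + 1) (by omega)
    have h3 : (k : ℝ) * (w (N + 1) - w N) = -((k : ℝ) * (-(w (N + 1) - w N))) := by
      ring
    linarith

lemma sigma_facts (σ : ℕ → ℝ) (x₀ s L : ℝ)
    (hs0 : 0 < s) (hsum : s + L = 2 * x₀) (hprod : s * L = 1)
    (h0 : s < σ 0) (h0' : σ 0 < L)
    (hσ : ∀ n, σ (n + 1) = 2 * x₀ - 1 / σ n) :
    (∀ n, s < σ n ∧ σ n < L) ∧ StrictMono σ := by
  have hL0 : 0 < L := by nlinarith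
  have hLs : L = 1 / s := eq_one_div_of_mul_eq_one_left (by nlinarith : L * s = 1)
  have hsL : s = 1 / L := eq_one_div_of_mul_eq_one_left (by nlinarith : s * L = 1)
  have bounds : ∀ n, s < σ n ∧ σ n < L := by
    intro n
    induction n with
    | zero => exact ⟨h0, h0'⟩
    | succ n ih =>
      obtain ⟨hl, hr⟩ := ih
      have hσn : 0 < σ n := lt_trans hs0 hl
      rw [hσ n]
      constructor
      · have h1 : 1 / σ n < 1 / s := one_div_lt_one_div_of_lt hs0 hl
        rw [← hLs] at h1
        linarith
      · have h1 : 1 / L < 1 / σ n := one_div_lt_one_div_of_lt hσn hr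
        rw [← hsL] at h1
        linarith
  refine ⟨bounds, strictMono_nat_of_lt_succ ?_⟩
  intro n
  obtain ⟨hl, hr⟩ := bounds n
  have hσn : 0 < σ n := lt_trans hs0 hl
  rw [hσ n]
  have h1 : 0 < (σ n - s) * (L - σ n) := mul_pos (by linarith) (by linarith)
  have hinv : σ n * (1 / σ n) = 1 := by field_simp
  nlinarith [h1, hinv, hσn]

lemma gap_small (σ : ℕ → ℝ) (hmono : Monotone σ) (hbdd : BddAbove (Set.range σ))
    (ε : ℝ) (hε : 0 < ε) : ∃ m, 1 ≤ m ∧ ∀ n, m ≤ n → σ (n + 1) - σ (n - 1) < ε := by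
  set ℓ := ⨆ n, σ n with hl
  have hup : ∀ n, σ n ≤ ℓ := fun n => le_ciSup hbdd n
  have hlt : ℓ - ε < ⨆ n, σ n := by rw [← hl]; exact sub_lt_self _ hε
  obtain ⟨i, hi⟩ := exists_lt_of_lt_ciSup hlt
  refine ⟨i + 2, by omega, fun n hn => ?_⟩
  have h1 := hup (n + 1)
  have h2 : σ i ≤ σ (n - 1) := hmono (by omega)
  linarith
/-- The sequence v_n(x) is nonoscillatory (eventually of constant sign) for
x > 1 and oscillatory for x < 1. -/
theorem v_oscillation_dichotomy
    (q₀ α x₀ : ℝ) (hq1 : 1 / 2 < q₀) (hq2 : q₀ < 1)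
    (hα1 : 1 - q₀ < α) (hα2 : α < q₀)
    (hx : x₀ = 1 / (2 * Real.sqrt (q₀ * (1 - q₀))))
    (σ : ℕ → ℝ)
    (hσ0 : σ 0 = 2 * x₀ * α) (hσ : ∀ n, σ (n + 1) = 2 * x₀ - 1 / σ n)
    (v : ℝ → ℕ → ℝ)
    (hv0 : ∀ x, v x 0 = 0) (hv1 : ∀ x, v x 1 = 1)
    (hvr : ∀ x, ∀ n, 1 ≤ n →
      v x (n + 1) = (2 * x - σ (n + 1) + σ (n - 1)) * v x n - v x (n - 1)) :
    (∀ x : ℝ, 1 < x →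
      ∃ m : ℕ, (∀ n, m ≤ n → 0 < v x n) ∨ (∀ n, m ≤ n → v x n < 0)) ∧
    (∀ x : ℝ, x < 1 →
      ¬ ∃ m : ℕ, (∀ n, m ≤ n → 0 < v x n) ∨ (∀ n, m ≤ n → v x n < 0)) := by
  -- basic facts about q₀ and the square root
  have hq0 : 0 < q₀ * (1 - q₀) := by nlinarith
  set r := Real.sqrt (q₀ * (1 - q₀)) with hrdef
  have hr : 0 < r := Real.sqrt_pos.mpr hq0
  have hr2 : r * r = q₀ * (1 - q₀) := Real.mul_self_sqrt hq0.le
  -- fixed points s < L of the Riccati map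
  set s := (1 - q₀) / r with hsdef
  set L := q₀ / r with hLdef
  have hs0 : 0 < s := div_pos (by linarith) hr
  have hsum : s + L = 2 * x₀ := by
    rw [hx, hsdef, hLdef]; field_simp; ring
  have hprod : s * L = 1 := by
    rw [hsdef, hLdef, div_mul_div_comm, hr2, mul_comm (1 - q₀) q₀]
    exact div_self (by positivity)
  have hσ0v : σ 0 = α / r := by rw [hσ0, hx]; field_simp
  have h0 : s < σ 0 := by
    rw [hσ0v, hsdef]; exact (div_lt_div_iff_of_pos_right hr).mpr (by linarith)
  have h0' : σ 0 < L := by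
    rw [hσ0v, hLdef]; exact (div_lt_div_iff_of_pos_right hr).mpr hα2
  obtain ⟨hbounds, hmono⟩ := sigma_facts σ x₀ s L hs0 hsum hprod h0 h0' hσ
  have hbdd : BddAbove (Set.range σ) := ⟨L, by rintro y ⟨n, rfl⟩; exact (hbounds n).2.le⟩
  -- no two consecutive zeros of v
  have hnz : ∀ x : ℝ, ∀ n, ¬(v x n = 0 ∧ v x (n + 1) = 0) := by
    intro x n
    induction n with
    | zero => rintro ⟨-, h⟩; rw [hv1 x] at h; exact one_ne_zero h
    | succ n ih =>
      rintro ⟨h1, h2⟩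
      have hr' := hvr x (n + 1) (by omega)
      rw [show n + 1 - 1 = n by omega, h1, h2] at hr'
      exact ih ⟨by linarith, h1⟩
  constructor
  · -- x > 1 : nonoscillatory
    intro x hx1
    obtain ⟨m, hm1, hgap⟩ := gap_small σ hmono.monotone hbdd (2 * (x - 1)) (by linarith)
    exact nonosc (v x) (fun n => 2 * x - σ (n + 1) + σ (n - 1)) m hm1
      (fun n hn => by have h := hgap n hn; show (2:ℝ) ≤ 2 * x - σ (n + 1) + σ (n - 1); linarith)
      (fun n hn => hvr x n hn) (hnz x)
  · -- x < 1 : oscillatory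
    intro x hx1
    rintro ⟨m, hcase | hcase⟩
    · exact osc_false (v x) (fun n => 2 * x - σ (n + 1) + σ (n - 1)) x hx1
        (max m 1) (le_max_right m 1)
        (fun n hn => by
          have h : σ (n - 1) < σ (n + 1) := hmono (by omega)
          show 2 * x - σ (n + 1) + σ (n - 1) ≤ 2 * x
          linarith)
        (fun n hn => hvr x n hn)
        (fun n hn => hcase n (le_trans (le_max_left m 1) hn))
    · exact osc_false (fun n => -v x n) (fun n => 2 * x - σ (n + 1) + σ (n - 1)) x hx1
        (max m 1) (le_max_right m 1)
        (fun n hn => by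
          have h : σ (n - 1) < σ (n + 1) := hmono (by omega)
          show 2 * x - σ (n + 1) + σ (n - 1) ≤ 2 * x
          linarith)
        (fun n hn => by show -v x (n + 1) = (2 * x - σ (n + 1) + σ (n - 1)) * -v x n - -v x (n - 1); rw [hvr x n hn]; ring)
        (fun n hn => by
          simp only [Left.nonneg_neg_iff, neg_pos]
          exact hcase n (le_trans (le_max_left m 1) hn))
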